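/- Let H be a real Hilbert space, F : H → ℝ Fréchet differentiable with gradient ∇F, and assume ∇F is strongly monotone with constant c > 0, i.e. ⟨∇F(x) − ∇F(y), x − y⟩ ≥ c‖x − y‖² for all x, y. Let ū ∈ H satisfy ∇F(ū) = 0. If u : [0,∞) → H is a gradient-flow solution, then ‖u(l) − ū‖ ≤ e^{−c l} ‖u(0) − ū‖ for every l ≥ 0; in particular u(l) → ū as l → ∞. (Exponential decay of the gradient flow, Theorem 4.1(d), equation (4.3).) -/

import Mathlib

/-- Exponential decay of the gradient flow towards a critical point
(Theorem 4.1(d), equation (4.3)): if `∇F` is strongly monotone with constant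
`c > 0` and `∇F(ū) = 0`, then `‖u(l) − ū‖ ≤ e^{−cl}‖u(0) − ū‖` and
`u(l) → ū` as `l → ∞`. -/
theorem gradient_flow_exponential_decay
    {H : Type*} [NormedAddCommGroup H] [InnerProductSpace ℝ H] [CompleteSpace H]
    (F : H → ℝ) (gradF : H → H) (hF : ∀ u : H, HasGradientAt F (gradF u) u)
    (c : ℝ) (hc : 0 < c)
    (hmono : ∀ x y : H, c * ‖x - y‖ ^ 2 ≤ (inner ℝ (gradF x - gradF y) (x - y) : ℝ))
    (ubar : H) (hcrit : gradF ubar = 0)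
    (u : ℝ → H)
    (hu : ∀ l ∈ Set.Ici (0:ℝ), HasDerivWithinAt u (-gradF (u l)) (Set.Ici 0) l) :
    (∀ l ∈ Set.Ici (0:ℝ),
        ‖u l - ubar‖ ≤ Real.exp (-(c * l)) * ‖u 0 - ubar‖) ∧
      Filter.Tendsto u Filter.atTop (nhds ubar) := by
  set f : ℝ → ℝ := fun l => (inner ℝ (u l - ubar) (u l - ubar) : ℝ) with hf_def
  set f' : ℝ → ℝ := fun l => (inner ℝ (u l - ubar) (-gradF (u l)) : ℝ)
      + (inner ℝ (-gradF (u l)) (u l - ubar) : ℝ) with hf'_def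
  -- derivative of f within Ici t
  have hderiv : ∀ t ∈ Set.Ici (0:ℝ), HasDerivWithinAt f (f' t) (Set.Ici t) t := by
    intro t ht
    have h1 : HasDerivWithinAt (fun l => u l - ubar) (-gradF (u t)) (Set.Ici t) t :=
      ((hu t ht).mono (Set.Ici_subset_Ici.2 ht)).sub_const ubar
    exact h1.inner ℝ h1
  -- bound on f'
  have hbound : ∀ t, f' t ≤ (-(2*c)) * f t + 0 := by
    intro t
    have hm := hmono (u t) ubar
    rw [hcrit, sub_zero] at hm
    have hnorm : f t = ‖u t - ubar‖ ^ 2 := by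
      simp [hf_def, real_inner_self_eq_norm_sq]
    have hsymm : (inner ℝ (u t - ubar) (-gradF (u t)) : ℝ)
        = (inner ℝ (-gradF (u t)) (u t - ubar) : ℝ) := real_inner_comm _ _
    have : f' t = -2 * (inner ℝ (gradF (u t)) (u t - ubar) : ℝ) := by
      simp only [hf'_def, inner_neg_left, inner_neg_right,
        real_inner_comm (u t - ubar) (gradF (u t))]
      ring
    rw [this, hnorm, add_zero]
    nlinarith [hm]
  -- main estimate
  have main : ∀ l ∈ Set.Ici (0:ℝ), ‖u l - ubar‖ ≤ Real.exp (-(c * l)) * ‖u 0 - ubar‖ := by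
    intro l hl
    have hcont : ContinuousOn f (Set.Icc 0 l) := by
      have hucont : ContinuousOn u (Set.Icc 0 l) := fun t ht =>
        ((hu t ht.1).continuousWithinAt).mono (fun x hx => hx.1)
      exact (hucont.sub continuousOn_const).inner (hucont.sub continuousOn_const)
    have hG := le_gronwallBound_of_liminf_deriv_right_le (a := 0) (b := l)
      (δ := f 0) (K := -(2*c)) (ε := 0) hcont
      (fun x hx r hr => ((hderiv x hx.1).liminf_right_slope_le hr))
      le_rfl (fun x hx => hbound x) l ⟨hl, le_rfl⟩
    rw [sub_zero, gronwallBound_ε0] at hG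
    have hfl : ‖u l - ubar‖ ^ 2 ≤ (Real.exp (-(c * l)) * ‖u 0 - ubar‖) ^ 2 := by
      have : f 0 * Real.exp (-(2*c) * l) = (Real.exp (-(c*l)) * ‖u 0 - ubar‖)^2 := by
        rw [hf_def]
        simp only [real_inner_self_eq_norm_sq]
        rw [mul_pow, ← Real.exp_nat_mul]
        ring_nf
      rw [← this]
      calc ‖u l - ubar‖ ^ 2 = f l := by simp [hf_def, real_inner_self_eq_norm_sq]
        _ ≤ _ := hG
    exact (abs_le_of_sq_le_sq' hfl (by positivity)).2
  refine ⟨main, ?_⟩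
  rw [tendsto_iff_norm_sub_tendsto_zero]
  apply squeeze_zero' (Filter.Eventually.of_forall fun t => norm_nonneg _)
    ((Filter.eventually_ge_atTop (0:ℝ)).mono fun t ht => main t ht)
  have h1 : Filter.Tendsto (fun l : ℝ => Real.exp (-(c * l))) Filter.atTop (nhds 0) := by
    apply Real.tendsto_exp_atBot.comp
    exact (Filter.tendsto_neg_atBot_iff.2 (Filter.Tendsto.const_mul_atTop hc Filter.tendsto_id))
  simpa using h1.mul_const ‖u 0 - ubar‖
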